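/- Any nonzero integer-valued circulation X on a finite directed graph can be written as X = Σ_{i=0}^{k} 2^i · Y_i, where k = ⌈log₂ ‖X‖⌉, ‖X‖ = max_e |X(e)|, and each Y_i is a circulation with |Y_i(e)| ≤ 1 for all edges e. -/

import Mathlib

open Finset

def IsCircZ {V E : Type} [Fintype E] [DecidableEq V] (src tgt : E → V) (X : E → ℤ) : Prop :=
  ∀ v : V, (∑ e, if tgt e = v then X e else 0) = ∑ e, if src e = v then X e else 0

/-- The infinity norm of a circulation: the maximum absolute value over all edges. -/
def circNorm {E : Type} [Fintype E] (X : E → ℤ) : ℕ :=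
  Finset.univ.sup fun e => (X e).natAbs



section aux
variable {V E : Type} [Fintype E] [DecidableEq V] (src tgt : E → V)

/-- degree of v in edge set O (self-loops count twice) -/
def degO (O : Finset E) (v : V) : ℕ :=
  ∑ e ∈ O, ((if tgt e = v then 1 else 0) + (if src e = v then 1 else 0))

variable {src tgt}

lemma sum_ite_single [DecidableEq E] (w : E → V) (v : V) (e : E) (z : ℤ) :
    (∑ e', if w e' = v then (if e' = e then z else 0) else 0) = (if w e = v then z else 0) := by
  rw [Finset.sum_eq_single e]
  · simp
  · intro b _ hb; simp [hb]
  · intro h; exact absurd (mem_univ e) h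

lemma sum_ite_add (w : E → V) (v : V) (f g : E → ℤ) :
    (∑ e, if w e = v then (f e + g e) else 0)
      = (∑ e, if w e = v then f e else 0) + (∑ e, if w e = v then g e else 0) := by
  rw [← Finset.sum_add_distrib]
  exact Finset.sum_congr rfl fun e _ => by split <;> simp

/-- abstract incidence data for an edge incident to `a` -/
lemma unit_flow [DecidableEq E] (e : E) (a : V) (hinc : src e = a ∨ tgt e = a) :
    ∃ (c : V) (U : E → ℤ),
      (∀ e', e' ≠ e → U e' = 0) ∧ (|U e| = 1) ∧
      (∀ v, ((if tgt e = v then 1 else 0) + (if src e = v then 1 else 0))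
          = ((if v = a then 1 else 0) + (if v = c then (1:ℕ) else 0))) ∧
      (∀ v, (∑ e', if tgt e' = v then U e' else 0) - (∑ e', if src e' = v then U e' else 0)
        = (if v = c then 1 else 0) - (if v = a then 1 else 0)) := by
  rcases hinc with h1 | h1
  · refine ⟨tgt e, fun e' => if e' = e then 1 else 0, fun e' h => if_neg h, by simp, ?_, ?_⟩
    · intro v
      rw [h1]
      by_cases h2 : tgt e = v <;> by_cases h3 : a = v <;>
        simp [h2, h3, eq_comm] <;> exact fun h => h2 h.symm
    · intro v
      rw [sum_ite_single tgt v e 1, sum_ite_single src v e 1, h1]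
      by_cases h2 : tgt e = v <;> by_cases h3 : a = v <;>
        simp [h2, h3, eq_comm] <;> exact fun h => h2 h.symm
  · refine ⟨src e, fun e' => if e' = e then -1 else 0, fun e' h => if_neg h, by simp, ?_, ?_⟩
    · intro v
      rw [h1]
      by_cases h2 : src e = v <;> by_cases h3 : a = v <;>
        simp [h2, h3, eq_comm, add_comm] <;> exact fun h => h2 h.symm
    · intro v
      rw [sum_ite_single tgt v e (-1), sum_ite_single src v e (-1), h1]
      by_cases h2 : src e = v <;> by_cases h3 : a = v <;>
        simp [h2, h3, eq_comm] <;> exact fun h => h2 h.symm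

lemma path_lemma [DecidableEq E] (O : Finset E) : ∀ (a b : V), a ≠ b →
    (∀ v, Odd (degO src tgt O v) ↔ (v = a ∨ v = b)) →
    ∃ Z : E → ℤ, (∀ e, |Z e| ≤ 1) ∧ (∀ e, Z e ≠ 0 → e ∈ O) ∧
      ∀ v, (∑ e, if tgt e = v then Z e else 0) - (∑ e, if src e = v then Z e else 0)
        = (if v = b then 1 else 0) - (if v = a then 1 else 0) := by
  induction O using Finset.strongInduction with
  | _ O ih =>
    intro a b hab hO
    -- find an edge incident to a
    have hdega : Odd (degO src tgt O a) := (hO a).2 (Or.inl rfl)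
    have hex : ∃ e ∈ O, src e = a ∨ tgt e = a := by
      by_contra hc
      push_neg at hc
      have h0 : degO src tgt O a = 0 := by
        refine Finset.sum_eq_zero fun e he => ?_
        rcases hc e he with ⟨h1, h2⟩
        simp [h1, h2]
      rw [h0] at hdega
      simpa using hdega
    obtain ⟨e, heO, hinc⟩ := hex
    obtain ⟨c, U, hU0, hU1, hcontrib, hUb⟩ := unit_flow e a hinc
    have hss : O.erase e ⊂ O := Finset.erase_ssubset heO
    have hdeg : ∀ v, degO src tgt (O.erase e) v
        + ((if v = a then 1 else 0) + (if v = c then 1 else 0)) = degO src tgt O v := by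
      intro v
      rw [← hcontrib v]
      exact Finset.sum_erase_add O _ heO
    by_cases hca : c = a
    · -- self-loop: erase e, same parity
      have hO' : ∀ v, Odd (degO src tgt (O.erase e) v) ↔ (v = a ∨ v = b) := by
        intro v
        rw [← hO v, ← hdeg v, hca]
        by_cases h3 : v = a <;> simp [h3, Nat.odd_add]
      obtain ⟨Z, hZ1, hZ2, hZ3⟩ := ih _ hss a b hab hO'
      exact ⟨Z, hZ1, fun e' he' => Finset.mem_of_mem_erase (hZ2 e' he'), hZ3⟩
    by_cases hcb : c = b
    · -- direct edge from a to b
      refine ⟨U, ?_, ?_, ?_⟩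
      · intro e'
        by_cases h : e' = e
        · rw [h, hU1]
        · rw [hU0 e' h]; simp
      · intro e' he'
        by_cases h : e' = e
        · rwa [h]
        · exact absurd (hU0 e' h) he'
      · intro v; rw [hUb v, hcb]
    · -- recurse with path from c to b, prepend edge a→c
      have hO' : ∀ v, Odd (degO src tgt (O.erase e) v) ↔ (v = c ∨ v = b) := by
        intro v
        have h0 := hO v
        rw [← hdeg v] at h0
        by_cases h3 : v = a <;> by_cases h4 : v = c <;> by_cases h5 : v = b <;>
          simp only [h3, h4, h5, if_true, if_pos, if_neg, eq_self_iff_true,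
            Nat.odd_add] at h0 ⊢ <;>
          simp_all [Nat.odd_add] <;> tauto
      obtain ⟨Z, hZ1, hZ2, hZ3⟩ := ih _ hss c b hcb hO'
      have hZe : Z e = 0 := by
        by_contra h
        exact (Finset.notMem_erase e O) (hZ2 e h)
      refine ⟨Z + U, ?_, ?_, ?_⟩
      · intro e'
        by_cases h : e' = e
        · rw [h]; simp only [Pi.add_apply, hZe, zero_add]; rw [hU1]
        · simp only [Pi.add_apply, hU0 e' h, add_zero]
          exact hZ1 e'
      · intro e' he'
        by_cases h : e' = e
        · rwa [h]
        · simp only [Pi.add_apply, hU0 e' h, add_zero] at he'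
          exact Finset.mem_of_mem_erase (hZ2 e' he')
      · intro v
        simp only [Pi.add_apply]
        rw [sum_ite_add tgt v Z U, sum_ite_add src v Z U]
        have h1 := hZ3 v
        have h2 := hUb v
        split_ifs at h1 h2 ⊢ <;> omega

end aux

section aux2
variable {V E : Type} [Fintype E] [DecidableEq V] {src tgt : E → V}

lemma cycle_lemma [DecidableEq E] (O : Finset E) (hne : O.Nonempty)
    (heven : ∀ v, Even (degO src tgt O v)) :
    ∃ C : E → ℤ, IsCircZ src tgt C ∧ (∀ e, |C e| ≤ 1) ∧
      (∀ e, C e ≠ 0 → e ∈ O) ∧ (∃ e, C e ≠ 0) := by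
  obtain ⟨e0, he0⟩ := hne
  set U : E → ℤ := fun e' => if e' = e0 then 1 else 0 with hU
  have hUb : ∀ v, (∑ e', if tgt e' = v then U e' else 0) - (∑ e', if src e' = v then U e' else 0)
      = (if tgt e0 = v then 1 else 0) - (if src e0 = v then 1 else 0) := by
    intro v
    rw [hU, sum_ite_single tgt v e0 1, sum_ite_single src v e0 1]
  by_cases hloop : src e0 = tgt e0
  · refine ⟨U, ?_, ?_, ?_, ⟨e0, by simp [hU]⟩⟩
    · intro v
      have h := hUb v
      rw [hloop] at h
      omega
    · intro e'; rw [hU]; dsimp only; split <;> simp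
    · intro e' he'; rw [hU] at he'; dsimp only at he'
      by_cases h : e' = e0
      · rwa [h]
      · simp [h] at he'
  · -- erase e0, get path from tgt e0 back to src e0
    have hdeg : ∀ v, degO src tgt (O.erase e0) v
        + ((if tgt e0 = v then 1 else 0) + (if src e0 = v then 1 else 0))
          = degO src tgt O v := fun v => Finset.sum_erase_add O _ he0
    have hO' : ∀ v, Odd (degO src tgt (O.erase e0) v) ↔ (v = tgt e0 ∨ v = src e0) := by
      intro v
      have h0 := heven v
      rw [← hdeg v, Nat.even_iff] at h0
      rw [Nat.odd_iff]
      have e1 : (v = tgt e0) ↔ (tgt e0 = v) := eq_comm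
      have e2 : (v = src e0) ↔ (src e0 = v) := eq_comm
      rw [e1, e2]
      by_cases h3 : tgt e0 = v <;> by_cases h4 : src e0 = v <;>
        simp only [h3, h4, if_true, if_false, iff_true, iff_false, or_self, or_true,
          true_or, or_false, false_or, not_false_iff, not_true, ite_true, ite_false] at h0 ⊢ <;>
        first
        | exact absurd (h4.trans h3.symm) hloop
        | omega
    obtain ⟨Z, hZ1, hZ2, hZ3⟩ := path_lemma (O.erase e0) (tgt e0) (src e0)
      (fun h => hloop h.symm) hO'
    have hZe : Z e0 = 0 := by
      by_contra h
      exact (Finset.notMem_erase e0 O) (hZ2 e0 h)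
    refine ⟨Z + U, ?_, ?_, ?_, ⟨e0, by simp [hU, hZe]⟩⟩
    · intro v
      simp only [Pi.add_apply]
      rw [sum_ite_add tgt v Z U, sum_ite_add src v Z U]
      have h1 := hZ3 v
      have h2 := hUb v
      have e1 : (v = tgt e0) ↔ (tgt e0 = v) := eq_comm
      have e2 : (v = src e0) ↔ (src e0 = v) := eq_comm
      rw [if_congr e2 rfl rfl, if_congr e1 rfl rfl] at h1
      omega
    · intro e'
      by_cases h : e' = e0
      · rw [h]; simp [hU, hZe]
      · simp only [Pi.add_apply, hU, if_neg h, add_zero]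
        exact hZ1 e'
    · intro e' he'
      by_cases h : e' = e0
      · rwa [h]
      · simp only [Pi.add_apply, hU, if_neg h, add_zero] at he'
        exact Finset.mem_of_mem_erase (hZ2 e' he')

end aux2

section aux3
variable {V E : Type} [Fintype E] [DecidableEq V] {src tgt : E → V}

lemma sum_ite_sub (w : E → V) (v : V) (f g : E → ℤ) :
    (∑ e, if w e = v then (f e - g e) else 0)
      = (∑ e, if w e = v then f e else 0) - (∑ e, if w e = v then g e else 0) := by
  rw [← Finset.sum_sub_distrib]
  exact Finset.sum_congr rfl fun e _ => by split <;> simp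

lemma circ_add (f g : E → ℤ) (hf : IsCircZ src tgt f) (hg : IsCircZ src tgt g) :
    IsCircZ src tgt (f + g) := by
  intro v
  simp only [Pi.add_apply]
  rw [sum_ite_add tgt v f g, sum_ite_add src v f g, hf v, hg v]

lemma circ_sub (f g : E → ℤ) (hf : IsCircZ src tgt f) (hg : IsCircZ src tgt g) :
    IsCircZ src tgt (f - g) := by
  intro v
  simp only [Pi.sub_apply]
  rw [sum_ite_sub tgt v f g, sum_ite_sub src v f g, hf v, hg v]

lemma int_cast_zmod_two (x : ℤ) : (x : ZMod 2) = if Even x then 0 else 1 := by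
  by_cases h : Even x
  · rw [if_pos h]
    obtain ⟨t, rfl⟩ := h
    push_cast
    exact CharTwo.add_self_eq_zero _
  · rw [if_neg h]
    obtain ⟨t, rfl⟩ := Int.not_even_iff_odd.mp h
    push_cast
    have h2 : (2 : ZMod 2) = 0 := by decide
    rw [h2]
    ring

lemma even_deg [DecidableEq E] (X : E → ℤ) (hX : IsCircZ src tgt X) (v : V) :
    Even (degO src tgt (univ.filter fun e => ¬ Even (X e)) v) := by
  have key : ∀ w : E → V,
      (((∑ e ∈ univ.filter fun e => ¬ Even (X e), if w e = v then (1:ℕ) else 0) : ℕ) : ZMod 2)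
        = ((∑ e, if w e = v then X e else 0 : ℤ) : ZMod 2) := by
    intro w
    push_cast
    rw [Finset.sum_filter]
    refine Finset.sum_congr rfl fun e _ => ?_
    rw [int_cast_zmod_two]
    by_cases h1 : Even (X e) <;> by_cases h2 : w e = v <;> simp [h1, h2]
  have hsplit : degO src tgt (univ.filter fun e => ¬ Even (X e)) v
      = (∑ e ∈ univ.filter fun e => ¬ Even (X e), if tgt e = v then 1 else 0)
        + (∑ e ∈ univ.filter fun e => ¬ Even (X e), if src e = v then 1 else 0) :=
    Finset.sum_add_distrib
  rw [hsplit]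
  have hcast : ((((∑ e ∈ univ.filter fun e => ¬ Even (X e), if tgt e = v then (1:ℕ) else 0)
      + (∑ e ∈ univ.filter fun e => ¬ Even (X e), if src e = v then (1:ℕ) else 0)) : ℕ)
        : ZMod 2) = 0 := by
    rw [Nat.cast_add, key tgt, key src, hX v]
    exact CharTwo.add_self_eq_zero _
  have h2 := (ZMod.natCast_eq_zero_iff _ 2).mp hcast
  exact even_iff_two_dvd.mpr h2

lemma parity_lemma2 [DecidableEq E] :
    ∀ (n : ℕ) (X : E → ℤ), (univ.filter fun e => ¬ Even (X e)).card = n →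
    IsCircZ src tgt X →
    ∃ Y : E → ℤ, IsCircZ src tgt Y ∧ (∀ e, |Y e| ≤ 1) ∧ ∀ e, (Even (Y e) ↔ Even (X e)) := by
  intro n
  induction n using Nat.strong_induction_on with
  | _ n ih =>
    intro X hcard hX
    by_cases h0 : (univ.filter fun e => ¬ Even (X e)) = ∅
    · refine ⟨0, fun v => by simp, by simp, fun e => ?_⟩
      have he : ¬ ¬ Even (X e) := fun h => by
        have hm : e ∈ (univ.filter fun e => ¬ Even (X e)) := Finset.mem_filter.mpr ⟨mem_univ e, h⟩
        rw [h0] at hm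
        exact absurd hm (Finset.notMem_empty e)
      simp [not_not.mp he]
    · obtain ⟨C, hCc, hC1, hC2, e0, hC3⟩ :=
        cycle_lemma _ (Finset.nonempty_of_ne_empty h0) (even_deg X hX)
      have hCodd : ∀ e, C e ≠ 0 → ¬ Even (C e) := by
        intro e he hev
        have h := hC1 e
        rw [abs_le] at h
        obtain ⟨t, ht⟩ := hev
        omega
      have hsubset : (univ.filter fun e => ¬ Even ((X - C) e))
          ⊆ (univ.filter fun e => ¬ Even (X e)) := by
        intro e he
        rw [Finset.mem_filter] at he ⊢
        refine ⟨mem_univ e, fun hXe => he.2 ?_⟩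
        simp only [Pi.sub_apply]
        by_cases hc : C e = 0
        · rwa [hc, sub_zero]
        · exact (((Finset.mem_filter.mp (hC2 e hc)).2) hXe).elim
      have he0R : e0 ∈ (univ.filter fun e => ¬ Even (X e)) := hC2 e0 hC3
      have hXe0 : ¬ Even (X e0) := (Finset.mem_filter.mp he0R).2
      have he0L : e0 ∉ (univ.filter fun e => ¬ Even ((X - C) e)) := by
        rw [Finset.mem_filter]
        rintro ⟨-, h⟩
        exact h (by
          simp only [Pi.sub_apply]
          exact Int.even_sub.mpr (iff_of_false hXe0 (hCodd e0 hC3)))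
      have hsub : (univ.filter fun e => ¬ Even ((X - C) e))
          ⊂ (univ.filter fun e => ¬ Even (X e)) :=
        (Finset.ssubset_iff_of_subset hsubset).mpr ⟨e0, he0R, he0L⟩
      have hXc' : IsCircZ src tgt (X - C) := circ_sub X C hX hCc
      obtain ⟨Y', hY'c, hY'1, hY'p⟩ := ih _ (hcard ▸ Finset.card_lt_card hsub) (X - C) rfl hXc'
      refine ⟨Y' + C, circ_add Y' C hY'c hCc, ?_, ?_⟩
      · intro e
        by_cases hc : C e = 0
        · simp only [Pi.add_apply, hc, add_zero]
          exact hY'1 e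
        · have hXe : ¬ Even (X e) := (Finset.mem_filter.mp (hC2 e hc)).2
          have hX'e : Even (X e - C e) := Int.even_sub.mpr (iff_of_false hXe (hCodd e hc))
          have hY'e : Even (Y' e) := (hY'p e).mpr (by simpa using hX'e)
          have hY'z : Y' e = 0 := by
            have h := hY'1 e
            rw [abs_le] at h
            obtain ⟨t, ht⟩ := hY'e
            omega
          simp only [Pi.add_apply, hY'z, zero_add]
          exact hC1 e
      · intro e
        have h1 : Even (Y' e) ↔ Even (X e - C e) := by simpa using hY'p e
        simp only [Pi.add_apply]
        rw [Int.even_add, h1, Int.even_sub]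
        by_cases h2 : Even (C e) <;> by_cases h3 : Even (X e) <;> tauto

lemma parity_lemma' [DecidableEq E] (X : E → ℤ) (hX : IsCircZ src tgt X) :
    ∃ Y : E → ℤ, IsCircZ src tgt Y ∧ (∀ e, |Y e| ≤ 1) ∧ ∀ e, (Even (Y e) ↔ Even (X e)) :=
  parity_lemma2 _ X rfl hX

end aux3


section main
variable {V E : Type} [Fintype E] [DecidableEq V] {src tgt : E → V}

lemma main_aux [DecidableEq E] :
    ∀ (k : ℕ) (X : E → ℤ), IsCircZ src tgt X → (∀ e, |X e| ≤ 2 ^ k) →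
    ∃ Y : Fin (k+1) → E → ℤ, (∀ i, IsCircZ src tgt (Y i)) ∧ (∀ i e, |Y i e| ≤ 1) ∧
      ∀ e, X e = ∑ i : Fin (k+1), 2 ^ (i:ℕ) * Y i e := by
  intro k
  induction k with
  | zero =>
    intro X hX hb
    exact ⟨fun _ => X, fun _ => hX, fun i e => by simpa using hb e, fun e => by simp⟩
  | succ k ih =>
    intro X hX hb
    obtain ⟨Y0, hY0c, hY0b, hY0p⟩ := parity_lemma' X hX
    have hev : ∀ e, Even (X e - Y0 e) := fun e => Int.even_sub.mpr (hY0p e).symm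
    set X' : E → ℤ := fun e => (X e - Y0 e) / 2 with hX'def
    have hX2 : ∀ e, 2 * X' e = X e - Y0 e := fun e => Int.mul_ediv_cancel' (hev e).two_dvd
    have hX'c : IsCircZ src tgt X' := by
      intro v
      have hsubc : IsCircZ src tgt (X - Y0) := circ_sub X Y0 hX hY0c
      have h2 : ∀ w : E → V, 2 * (∑ e, if w e = v then X' e else 0)
          = ∑ e, if w e = v then (X e - Y0 e) else 0 := by
        intro w
        rw [Finset.mul_sum]
        refine Finset.sum_congr rfl fun e _ => ?_
        split
        · exact hX2 e
        · ring
      have h3 := hsubc v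
      simp only [Pi.sub_apply] at h3
      have h4 : 2 * (∑ e, if tgt e = v then X' e else 0)
          = 2 * (∑ e, if src e = v then X' e else 0) := by
        rw [h2 tgt, h2 src, h3]
      exact mul_left_cancel₀ two_ne_zero h4
    have hX'b : ∀ e, |X' e| ≤ 2 ^ k := by
      intro e
      have h1 := hb e
      have h2 := hY0b e
      have h3 := hX2 e
      rw [abs_le] at h1 h2 ⊢
      have hp : (2:ℤ) ^ (k+1) = 2 ^ k * 2 := by ring
      rw [hp] at h1
      obtain ⟨t, ht⟩ := hev e
      omega
    obtain ⟨Y', hY'c, hY'b, hY's⟩ := ih X' hX'c hX'b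
    refine ⟨Fin.cons Y0 Y', ?_, ?_, ?_⟩
    · intro i
      refine Fin.cases ?_ ?_ i
      · rw [Fin.cons_zero]; exact hY0c
      · intro j; rw [Fin.cons_succ]; exact hY'c j
    · intro i
      refine Fin.cases ?_ ?_ i
      · rw [Fin.cons_zero]; exact hY0b
      · intro j; rw [Fin.cons_succ]; exact hY'b j
    · intro e
      rw [Fin.sum_univ_succ]
      simp only [Fin.cons_zero, Fin.cons_succ, Fin.val_succ, Fin.val_zero, pow_zero, one_mul]
      have hstep : (∑ i : Fin (k+1), 2 ^ ((i:ℕ)+1) * Y' i e)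
          = 2 * ∑ i : Fin (k+1), 2 ^ (i:ℕ) * Y' i e := by
        rw [Finset.mul_sum]
        exact Finset.sum_congr rfl fun i _ => by ring
      rw [hstep, ← hY's e]
      have := hX2 e
      omega

end main

/-- Any nonzero integer circulation `X` can be written as `∑_{i=0}^{k} 2^i • Y_i`
with `k = ⌈log₂ ‖X‖⌉` and each `Y_i` a unitary circulation. -/
theorem stmt_1 {V E : Type} [Fintype E] [DecidableEq V] (src tgt : E → V)
    (X : E → ℤ) (hX : IsCircZ src tgt X) (hX0 : X ≠ 0) :
    ∃ Y : Fin (Nat.clog 2 (circNorm X) + 1) → E → ℤ,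
      (∀ i, IsCircZ src tgt (Y i)) ∧ (∀ i e, |Y i e| ≤ 1) ∧
      (∀ e, X e = ∑ i : Fin (Nat.clog 2 (circNorm X) + 1), 2 ^ (i : ℕ) * Y i e) := by

  classical
  apply main_aux (Nat.clog 2 (circNorm X)) X hX
  intro e
  have h1 : (X e).natAbs ≤ circNorm X := by
    exact Finset.le_sup (f := fun e => (X e).natAbs) (mem_univ e)
  have h2 : circNorm X ≤ 2 ^ Nat.clog 2 (circNorm X) := Nat.le_pow_clog one_lt_two _
  have h3 : (X e).natAbs ≤ 2 ^ Nat.clog 2 (circNorm X) := le_trans h1 h2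
  calc |X e| = ((X e).natAbs : ℤ) := (Int.abs_eq_natAbs _)
    _ ≤ ((2 ^ Nat.clog 2 (circNorm X) : ℕ) : ℤ) := by exact_mod_cast h3
    _ = 2 ^ Nat.clog 2 (circNorm X) := by push_cast; ring
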